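/- If a bivector field P = (1/2)P^{ab}(x)x*_b x*_a on ℝ^n satisfies the Poisson condition [P,P] = 0 for the Schouten bracket, then its canonical lift P̂ = P + t t* ∂_a P^{ab} x*_b to the Thomas bundle also satisfies [P̂,P̂] = 0. -/

import Mathlib

noncomputable section

/- Lifting of an even Poisson structure to the Thomas bundle, in components.
`R` is a commutative ℝ-algebra (modeling `C^∞(ℝ^n)`) with commuting
derivations `D a = ∂/∂x^a`.  The algebra of densities (functions on the Thomas
bundle M̂) is `C = AddMonoidAlgebra R ℝ`, with `single λ f = f(x)t^λ`; its
coordinate directions are indexed by `Option (Fin n)` (`some a ↦ x^a`,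
`none ↦ t`), with corresponding derivations `Dv`.  A bivector
`P = ½P^{ab}x*_bx*_a` is given by its antisymmetric components `P a b`, and the
Schouten condition `[P,P] = 0` by the Jacobi identity
`Σ_l (P^{li}∂_lP^{jk} + P^{lj}∂_lP^{ki} + P^{lk}∂_lP^{ij}) = 0`.  The canonical
lift `P̂ = P + t t* ∂_aP^{ab} x*_b` has components `P̂^{ab} = P^{ab}`,
`P̂^{bt} = t Σ_a ∂_aP^{ab}`, `P̂^{tb} = −t Σ_a ∂_aP^{ab}`, `P̂^{tt} = 0`.
Claim: `[P,P] = 0` implies `[P̂,P̂] = 0`. -/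

variable {R : Type*} [CommRing R] [Algebra ℝ R] {n : ℕ}

/-- The coordinate derivations on the Thomas bundle: `∂/∂x^a` and `∂/∂t`. -/
def Dv (D : Fin n → Derivation ℝ R R) :
    Option (Fin n) → AddMonoidAlgebra R ℝ → AddMonoidAlgebra R ℝ
  | some a => fun ψ => AddMonoidAlgebra.ofCoeff (Finsupp.mapRange (D a) (map_zero _) ψ.coeff)
  | none => fun ψ => AddMonoidAlgebra.ofCoeff (Finsupp.sum ψ.coeff fun l c => Finsupp.single (l - 1) (l • c))

/-- Components of the canonical lift `P̂` of the bivector `P`. -/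
def Qhat (D : Fin n → Derivation ℝ R R) (P : Fin n → Fin n → R) :
    Option (Fin n) → Option (Fin n) → AddMonoidAlgebra R ℝ
  | some a, some b => AddMonoidAlgebra.single 0 (P a b)
  | none, some b => -AddMonoidAlgebra.single 1 (∑ a, D a (P a b))
  | some b, none => AddMonoidAlgebra.single 1 (∑ a, D a (P a b))
  | none, none => 0

section Helpers

variable (D : Fin n → Derivation ℝ R R)

lemma Dv_some (a : Fin n) (l : ℝ) (c : R) :
    Dv D (some a) (AddMonoidAlgebra.single l c) = AddMonoidAlgebra.single l (D a c) :=
  congrArg AddMonoidAlgebra.ofCoeff (Finsupp.mapRange_single (hf := map_zero _))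

lemma Dv_none (l : ℝ) (c : R) :
    Dv D none (AddMonoidAlgebra.single l c) = AddMonoidAlgebra.single (l - 1) (l • c) := by
  exact congrArg AddMonoidAlgebra.ofCoeff (Finsupp.sum_single_index (by simp))

lemma Dv_zero (w : Option (Fin n)) : Dv D w 0 = 0 := by
  cases w <;> simp [Dv]

lemma sneg (l : ℝ) (x : R) :
    -(AddMonoidAlgebra.single l x) = (AddMonoidAlgebra.single l (-x) : AddMonoidAlgebra R ℝ) :=
  (AddMonoidAlgebra.single_neg l x).symm

lemma sadd (l : ℝ) (x y : R) :
    AddMonoidAlgebra.single l x + AddMonoidAlgebra.single l y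
      = (AddMonoidAlgebra.single l (x + y) : AddMonoidAlgebra R ℝ) :=
  (AddMonoidAlgebra.single_add l x y).symm

lemma szero (l : ℝ) : (AddMonoidAlgebra.single l (0 : R)) = 0 :=
  AddMonoidAlgebra.single_zero l

lemma ssum {α : Type*} (s : Finset α) (a : ℝ) (f : α → R) :
    (∑ x ∈ s, (AddMonoidAlgebra.single a (f x) : AddMonoidAlgebra R ℝ))
      = AddMonoidAlgebra.single a (∑ x ∈ s, f x) :=
  (map_sum (AddMonoidAlgebra.singleAddHom a) f s).symm

lemma seqzero (l : ℝ) (x : R) :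
    (AddMonoidAlgebra.single l x : AddMonoidAlgebra R ℝ) = 0 ↔ x = 0 :=
  AddMonoidAlgebra.single_eq_zero

lemma keyR (hD : ∀ a b (f : R), D a (D b f) = D b (D a f))
    (P : Fin n → Fin n → R)
    (hanti : ∀ a b, P a b = -P b a)
    (hJacobi : ∀ i j k : Fin n,
      ∑ l, (P l i * D l (P j k) + P l j * D l (P k i) + P l k * D l (P i j)) = 0)
    (i j : Fin n) :
    ∑ l, (P l i * D l (∑ a, D a (P a j)) - P l j * D l (∑ a, D a (P a i))
      + (∑ a, D a (P a l)) * D l (P i j)) = 0 := by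
  have tor : ∀ x : R, x + x = 0 → x = 0 := by
    intro x h
    have h2 : (2 : ℝ) • x = 0 := by rw [two_smul]; exact h
    simpa using (smul_eq_zero.mp h2).resolve_left (by norm_num)
  have H0 : ∑ a : Fin n, ∑ l : Fin n,
      (D a (P l i) * D l (P j a) + P l i * D a (D l (P j a))
        + D a (P l j) * D l (P a i) + P l j * D a (D l (P a i))
        + D a (P l a) * D l (P i j) + P l a * D a (D l (P i j))) = 0 := by
    have e : ∀ a : Fin n, ∑ l : Fin n,
        (D a (P l i) * D l (P j a) + P l i * D a (D l (P j a))
          + D a (P l j) * D l (P a i) + P l j * D a (D l (P a i))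
          + D a (P l a) * D l (P i j) + P l a * D a (D l (P i j)))
        = D a (∑ l, (P l i * D l (P j a) + P l j * D l (P a i) + P l a * D l (P i j))) := by
      intro a
      rw [map_sum]
      refine Finset.sum_congr rfl fun l _ => ?_
      simp only [map_add, Derivation.leibniz, smul_eq_mul]
      ring
    rw [Finset.sum_congr rfl fun a _ => e a]
    simp only [hJacobi, map_zero, Finset.sum_const_zero]
  have hA : ∑ a : Fin n, ∑ l : Fin n,
      (D a (P l i) * D l (P j a) + D a (P l j) * D l (P a i)) = 0 := by
    have h1 : ∑ a : Fin n, ∑ l : Fin n,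
        (D a (P l i) * D l (P j a) + D a (P l j) * D l (P a i))
        = (∑ a : Fin n, ∑ l : Fin n, D a (P l i) * D l (P j a))
          + ∑ a : Fin n, ∑ l : Fin n, D a (P l j) * D l (P a i) := by
      simp only [Finset.sum_add_distrib]
    have h2 : ∑ a : Fin n, ∑ l : Fin n, D a (P l j) * D l (P a i)
        = ∑ a : Fin n, ∑ l : Fin n, D l (P a j) * D a (P l i) := Finset.sum_comm
    have h3 : (∑ a : Fin n, ∑ l : Fin n, D a (P l i) * D l (P j a))
          + ∑ a : Fin n, ∑ l : Fin n, D l (P a j) * D a (P l i)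
        = ∑ a : Fin n, ∑ l : Fin n,
            (D a (P l i) * D l (P j a) + D l (P a j) * D a (P l i)) := by
      rw [← Finset.sum_add_distrib]
      exact Finset.sum_congr rfl fun a _ => (Finset.sum_add_distrib).symm
    rw [h1, h2, h3]
    refine Finset.sum_eq_zero fun a _ => Finset.sum_eq_zero fun l _ => ?_
    rw [hanti j a]
    simp only [map_neg]
    ring
  have hC : ∑ a : Fin n, ∑ l : Fin n, P l a * D a (D l (P i j)) = 0 := by
    refine tor _ ?_
    have h2 : ∑ a : Fin n, ∑ l : Fin n, P l a * D a (D l (P i j))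
        = ∑ a : Fin n, ∑ l : Fin n, P a l * D l (D a (P i j)) := Finset.sum_comm
    nth_rewrite 2 [h2]
    rw [← Finset.sum_add_distrib]
    refine Finset.sum_eq_zero fun a _ => ?_
    rw [← Finset.sum_add_distrib]
    refine Finset.sum_eq_zero fun l _ => ?_
    rw [hanti a l, hD l a (P i j)]
    ring
  have step1 : ∑ l : Fin n, (P l i * D l (∑ a, D a (P a j))
        - P l j * D l (∑ a, D a (P a i)) + (∑ a, D a (P a l)) * D l (P i j))
      = ∑ l : Fin n, ∑ a : Fin n, (P l i * D l (D a (P a j))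
        - P l j * D l (D a (P a i)) + D a (P a l) * D l (P i j)) := by
    refine Finset.sum_congr rfl fun l _ => ?_
    rw [map_sum, map_sum, Finset.mul_sum, Finset.mul_sum, Finset.sum_mul,
      ← Finset.sum_sub_distrib, ← Finset.sum_add_distrib]
  rw [step1, Finset.sum_comm]
  have hpt : ∀ a l : Fin n, P l i * D l (D a (P a j)) - P l j * D l (D a (P a i))
      + D a (P a l) * D l (P i j)
      = (D a (P l i) * D l (P j a) + D a (P l j) * D l (P a i))
        + P l a * D a (D l (P i j))
        - (D a (P l i) * D l (P j a) + P l i * D a (D l (P j a))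
          + D a (P l j) * D l (P a i) + P l j * D a (D l (P a i))
          + D a (P l a) * D l (P i j) + P l a * D a (D l (P i j))) := by
    intro a l
    rw [hanti j a, hanti l a]
    simp only [map_neg]
    rw [hD a l (P a j), hD a l (P a i), hD a l (P i j)]
    ring
  rw [Finset.sum_congr rfl fun a _ => Finset.sum_congr rfl fun l _ => hpt a l]
  simp only [Finset.sum_add_distrib, Finset.sum_sub_distrib] at hA H0 ⊢
  linear_combination hA + hC - H0

end Helpers

theorem lift_of_Poisson_is_Poisson
    (D : Fin n → Derivation ℝ R R)
    (hD : ∀ a b (f : R), D a (D b f) = D b (D a f))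
    (P : Fin n → Fin n → R)
    (hanti : ∀ a b, P a b = -P b a)
    (hJacobi : ∀ i j k : Fin n,
      ∑ l, (P l i * D l (P j k) + P l j * D l (P k i) + P l k * D l (P i j)) = 0) :
    ∀ i j k : Option (Fin n),
      ∑ l : Option (Fin n),
        (Qhat D P l i * Dv D l (Qhat D P j k)
          + Qhat D P l j * Dv D l (Qhat D P k i)
          + Qhat D P l k * Dv D l (Qhat D P i j)) = 0 := by
  have cyc : ∀ i j k : Option (Fin n),
      (∑ l : Option (Fin n),
        (Qhat D P l i * Dv D l (Qhat D P j k)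
          + Qhat D P l j * Dv D l (Qhat D P k i)
          + Qhat D P l k * Dv D l (Qhat D P i j)))
      = ∑ l : Option (Fin n),
        (Qhat D P l j * Dv D l (Qhat D P k i)
          + Qhat D P l k * Dv D l (Qhat D P i j)
          + Qhat D P l i * Dv D l (Qhat D P j k)) := by
    intro i j k
    exact Finset.sum_congr rfl fun l _ => by ring
  have case1 : ∀ i j k : Fin n,
      ∑ l : Option (Fin n),
        (Qhat D P l (some i) * Dv D l (Qhat D P (some j) (some k))
          + Qhat D P l (some j) * Dv D l (Qhat D P (some k) (some i))
          + Qhat D P l (some k) * Dv D l (Qhat D P (some i) (some j))) = 0 := by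
    intro i j k
    rw [Fintype.sum_option]
    simp only [Qhat, sneg, sadd, ssum, Dv_some, Dv_none, mul_neg, neg_mul, neg_neg,
      AddMonoidAlgebra.single_mul_single, zero_smul, one_smul, zero_add, add_zero,
      sub_self, szero, mul_zero, zero_mul, seqzero]
    exact hJacobi i j k
  have case2 : ∀ i j : Fin n,
      ∑ l : Option (Fin n),
        (Qhat D P l (some i) * Dv D l (Qhat D P (some j) none)
          + Qhat D P l (some j) * Dv D l (Qhat D P none (some i))
          + Qhat D P l none * Dv D l (Qhat D P (some i) (some j))) = 0 := by
    intro i j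
    rw [Fintype.sum_option]
    simp only [Qhat, sneg, sadd, ssum, Dv_some, Dv_none, mul_neg, neg_mul, neg_neg,
      AddMonoidAlgebra.single_mul_single, zero_smul, one_smul, zero_add, add_zero,
      sub_self, szero, mul_zero, zero_mul, seqzero, map_neg]
    have hs : ∑ x : Fin n, (P x i * D x (∑ a, D a (P a j))
          + -(P x j * D x (∑ a, D a (P a i))) + (∑ a, D a (P a x)) * D x (P i j)) = 0 := by
      rw [Finset.sum_congr rfl fun l (_ : l ∈ Finset.univ) =>
        (show P l i * D l (∑ a, D a (P a j)) + -(P l j * D l (∑ a, D a (P a i)))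
            + (∑ a, D a (P a l)) * D l (P i j)
          = P l i * D l (∑ a, D a (P a j)) - P l j * D l (∑ a, D a (P a i))
            + (∑ a, D a (P a l)) * D l (P i j) from by ring)]
      exact keyR D hD P hanti hJacobi i j
    linear_combination hs
  have case3 : ∀ i : Fin n,
      ∑ l : Option (Fin n),
        (Qhat D P l (some i) * Dv D l (Qhat D P none none)
          + Qhat D P l none * Dv D l (Qhat D P none (some i))
          + Qhat D P l none * Dv D l (Qhat D P (some i) none)) = 0 := by
    intro i
    rw [Fintype.sum_option]
    simp only [Qhat, Dv_zero, sneg, sadd, ssum, Dv_some, Dv_none, mul_neg, neg_mul, neg_neg,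
      AddMonoidAlgebra.single_mul_single, zero_smul, one_smul, zero_add, add_zero,
      sub_self, szero, mul_zero, zero_mul, seqzero, map_neg, neg_add_cancel,
      Finset.sum_const_zero]
  have case4 :
      ∑ l : Option (Fin n),
        (Qhat D P l none * Dv D l (Qhat D P none none)
          + Qhat D P l none * Dv D l (Qhat D P none none)
          + Qhat D P l none * Dv D l (Qhat D P none none)) = 0 := by
    refine Finset.sum_eq_zero fun l _ => ?_
    simp only [Qhat, Dv_zero, mul_zero, add_zero, zero_add]
  intro i j k
  match i, j, k with
  | some i, some j, some k => exact case1 i j k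
  | some i, some j, none => exact case2 i j
  | some i, none, some k => rw [cyc, cyc]; exact case2 k i
  | none, some j, some k => rw [cyc]; exact case2 j k
  | some i, none, none => exact case3 i
  | none, some j, none => rw [cyc]; exact case3 j
  | none, none, some k => rw [cyc, cyc]; exact case3 k
  | none, none, none => exact case4

end
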